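/- Fix 0 < m < L with κ = L/m ≥ 2, and let δ ∈ (0, 1]. Then the function ℓ ↦ φ((1+δ)ℓ, ℓ, m) is strictly decreasing on the interval m ≤ ℓ ≤ L/(1+δ); on this interval it equals (L − ℓ + √((L − ℓ)δℓ)) / (L − m + √((L − m)((1+δ)ℓ − m))). -/

import Mathlib

/-- `β(s) = (√L − √s)/(√L + √s)`. -/
noncomputable def momBeta (L s : ℝ) : ℝ :=
  (Real.sqrt L - Real.sqrt s) / (Real.sqrt L + Real.sqrt s)

/-- The complex square root of a real number: `√x` if `x ≥ 0`, `i√(−x)` otherwise. -/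
noncomputable def csqrt (x : ℝ) : ℂ :=
  if 0 ≤ x then ((Real.sqrt x : ℝ) : ℂ) else Complex.I * ((Real.sqrt (-x) : ℝ) : ℂ)

/-- The discriminant `((1+β(s))²/4)(1 − ℓ/L)² − β(s)(1 − ℓ/L)`. -/
noncomputable def discr (L s ℓ : ℝ) : ℝ :=
  ((1 + momBeta L s) / 2) ^ 2 * (1 - ℓ / L) ^ 2 - momBeta L s * (1 - ℓ / L)

/-- The eigenvalue `((1+β(s))/2)(1 − ℓ/L) + sqrt(discriminant)` of `G(s, ℓ)`. -/
noncomputable def eigP (L s ℓ : ℝ) : ℂ :=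
  (((1 + momBeta L s) / 2 * (1 - ℓ / L) : ℝ) : ℂ) + csqrt (discr L s ℓ)

/-- The eigenvalue `((1+β(s))/2)(1 − ℓ/L) − sqrt(discriminant)` of `G(s, ℓ)`. -/
noncomputable def eigM (L s ℓ : ℝ) : ℂ :=
  (((1 + momBeta L s) / 2 * (1 - ℓ / L) : ℝ) : ℂ) - csqrt (discr L s ℓ)

/-- `ρ(s, ℓ)`: the maximum modulus of the two eigenvalues of `G(s, ℓ)`. -/
noncomputable def specRho (L s ℓ : ℝ) : ℝ :=
  max ‖eigP L s ℓ‖ ‖eigM L s ℓ‖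

/-- `φ(s, a, b) = min{1, ρ(s, a)/ρ(s, b)}` if `ρ(s, b) > 0`, and `1` otherwise. -/
noncomputable def phiRatio (L s a b : ℝ) : ℝ :=
  if 0 < specRho L s b then min 1 (specRho L s a / specRho L s b) else 1

lemma specRho_formula {L s ℓ : ℝ} (hℓ : 0 < ℓ) (hℓs : ℓ ≤ s) (hsL : s ≤ L) :
    specRho L s ℓ = ((L - ℓ) + Real.sqrt ((L - ℓ) * (s - ℓ))) /
      (Real.sqrt L * (Real.sqrt L + Real.sqrt s)) := by
  have hs : 0 < s := hℓ.trans_le hℓs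
  have hL : 0 < L := hs.trans_le hsL
  set u := Real.sqrt L with hud
  set v := Real.sqrt s with hvd
  have hu : 0 < u := Real.sqrt_pos.2 hL
  have hv : 0 < v := Real.sqrt_pos.2 hs
  have hu2 : u ^ 2 = L := Real.sq_sqrt hL.le
  have hv2 : v ^ 2 = s := Real.sq_sqrt hs.le
  have hvu : v ≤ u := Real.sqrt_le_sqrt hsL
  have huv0 : (0:ℝ) < u + v := by linarith
  have hDu : (0:ℝ) < u * (u + v) := by positivity
  have hdiscr : discr L s ℓ = ((L - ℓ) * (s - ℓ)) / (u * (u + v)) ^ 2 := by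
    unfold discr momBeta
    rw [← hud, ← hvd, ← hu2, ← hv2]
    field_simp
    ring
  have hnn : (0:ℝ) ≤ (L - ℓ) * (s - ℓ) :=
    mul_nonneg (by linarith) (by linarith)
  have hd0 : 0 ≤ discr L s ℓ := by rw [hdiscr]; positivity
  have hsd : Real.sqrt (discr L s ℓ) = Real.sqrt ((L - ℓ) * (s - ℓ)) / (u * (u + v)) := by
    rw [hdiscr, Real.sqrt_div hnn, Real.sqrt_sq hDu.le]
  have hA : (1 + momBeta L s) / 2 * (1 - ℓ / L) = (L - ℓ) / (u * (u + v)) := by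
    unfold momBeta
    rw [← hud, ← hvd, ← hu2]
    field_simp
    ring
  have hcs : csqrt (discr L s ℓ) = ((Real.sqrt (discr L s ℓ) : ℝ) : ℂ) := by
    simp [csqrt, hd0]
  have hAnn : 0 ≤ (1 + momBeta L s) / 2 * (1 - ℓ / L) := by
    rw [hA]; exact div_nonneg (by linarith) hDu.le
  have hdnn : 0 ≤ Real.sqrt (discr L s ℓ) := Real.sqrt_nonneg _
  have h1 : ‖eigP L s ℓ‖ = (1 + momBeta L s) / 2 * (1 - ℓ / L) + Real.sqrt (discr L s ℓ) := by
    unfold eigP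
    rw [hcs, ← Complex.ofReal_add, Complex.norm_real, Real.norm_eq_abs, abs_of_nonneg (by linarith)]
  have h2 : ‖eigM L s ℓ‖ = |(1 + momBeta L s) / 2 * (1 - ℓ / L) - Real.sqrt (discr L s ℓ)| := by
    unfold eigM
    rw [hcs, ← Complex.ofReal_sub, Complex.norm_real, Real.norm_eq_abs]
  have h3 : |(1 + momBeta L s) / 2 * (1 - ℓ / L) - Real.sqrt (discr L s ℓ)|
      ≤ (1 + momBeta L s) / 2 * (1 - ℓ / L) + Real.sqrt (discr L s ℓ) := by
    rw [abs_sub_le_iff]; constructor <;> linarith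
  have hfin : specRho L s ℓ = (1 + momBeta L s) / 2 * (1 - ℓ / L) + Real.sqrt (discr L s ℓ) := by
    unfold specRho; rw [h1, h2]; exact max_eq_left h3
  rw [hfin, hA, hsd]
  ring

lemma phi_formula {L m δ : ℝ} (hm : 0 < m) (hmL : m < L)
    (hδ0 : 0 < δ) {ℓ : ℝ} (hℓ : ℓ ∈ Set.Icc m (L / (1 + δ))) :
    phiRatio L ((1 + δ) * ℓ) ℓ m =
      (L - ℓ + Real.sqrt ((L - ℓ) * (δ * ℓ))) /
        (L - m + Real.sqrt ((L - m) * ((1 + δ) * ℓ - m))) := by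
  obtain ⟨hℓm, hℓL⟩ := hℓ
  have h1δ : (0:ℝ) < 1 + δ := by linarith
  have hℓ0 : 0 < ℓ := hm.trans_le hℓm
  have hsL : (1 + δ) * ℓ ≤ L := by
    rw [le_div_iff₀ h1δ] at hℓL; linarith
  have hℓs : ℓ ≤ (1 + δ) * ℓ := by nlinarith [mul_pos hδ0 hℓ0]
  have hms : m ≤ (1 + δ) * ℓ := hℓm.trans hℓs
  have hL : 0 < L := hm.trans hmL
  have hu : 0 < Real.sqrt L := Real.sqrt_pos.2 hL
  have hv : 0 < Real.sqrt ((1 + δ) * ℓ) := Real.sqrt_pos.2 (by positivity)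
  have hDu : 0 < Real.sqrt L * (Real.sqrt L + Real.sqrt ((1 + δ) * ℓ)) := by positivity
  have hsub : (1 + δ) * ℓ - ℓ = δ * ℓ := by ring
  have hNm : (0:ℝ) < L - m + Real.sqrt ((L - m) * ((1 + δ) * ℓ - m)) := by
    have := Real.sqrt_nonneg ((L - m) * ((1 + δ) * ℓ - m)); linarith
  have hρm : specRho L ((1 + δ) * ℓ) m =
      (L - m + Real.sqrt ((L - m) * ((1 + δ) * ℓ - m))) /
        (Real.sqrt L * (Real.sqrt L + Real.sqrt ((1 + δ) * ℓ))) :=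
    specRho_formula hm hms hsL
  have hρℓ : specRho L ((1 + δ) * ℓ) ℓ =
      (L - ℓ + Real.sqrt ((L - ℓ) * (δ * ℓ))) /
        (Real.sqrt L * (Real.sqrt L + Real.sqrt ((1 + δ) * ℓ))) := by
    rw [specRho_formula hℓ0 hℓs hsL, hsub]
  have hρmpos : 0 < specRho L ((1 + δ) * ℓ) m := by
    rw [hρm]; positivity
  rw [phiRatio, if_pos hρmpos, hρm, hρℓ]
  rw [div_div_div_comm, div_self (ne_of_gt hDu), div_one]
  apply min_eq_right
  rw [div_le_one hNm]
  have h1 : L - ℓ ≤ L - m := by linarith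
  have h2 : Real.sqrt ((L - ℓ) * (δ * ℓ)) ≤ Real.sqrt ((L - m) * ((1 + δ) * ℓ - m)) := by
    apply Real.sqrt_le_sqrt
    have h3 : δ * ℓ ≤ (1 + δ) * ℓ - m := by nlinarith
    exact mul_le_mul h1 h3 (by positivity) (by linarith)
  linarith

/-- (Lemma `la:lem:phi-decreasing`.) For `0 < m < L` with
`κ = L/m ≥ 2` and `δ ∈ (0, 1]`, the map `ℓ ↦ φ((1+δ)ℓ, ℓ, m)` is strictly
decreasing on `[m, L/(1+δ)]`, where it equals
`(L − ℓ + √((L − ℓ)δℓ))/(L − m + √((L − m)((1+δ)ℓ − m)))`. -/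
theorem stmt17 {L m δ : ℝ} (hm : 0 < m) (hmL : m < L) (hκ : 2 ≤ L / m)
    (hδ0 : 0 < δ) (hδ1 : δ ≤ 1) :
    StrictAntiOn (fun ℓ : ℝ => phiRatio L ((1 + δ) * ℓ) ℓ m)
      (Set.Icc m (L / (1 + δ))) ∧
    ∀ ℓ ∈ Set.Icc m (L / (1 + δ)),
      phiRatio L ((1 + δ) * ℓ) ℓ m =
        (L - ℓ + Real.sqrt ((L - ℓ) * (δ * ℓ))) /
          (L - m + Real.sqrt ((L - m) * ((1 + δ) * ℓ - m))) := by
  have key : ∀ ℓ ∈ Set.Icc m (L / (1 + δ)),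
      phiRatio L ((1 + δ) * ℓ) ℓ m =
        (L - ℓ + Real.sqrt ((L - ℓ) * (δ * ℓ))) /
          (L - m + Real.sqrt ((L - m) * ((1 + δ) * ℓ - m))) :=
    fun ℓ hℓ => phi_formula hm hmL hδ0 hℓ
  refine ⟨?_, key⟩
  intro a ha b hb hab
  show phiRatio L ((1 + δ) * b) b m < phiRatio L ((1 + δ) * a) a m
  rw [key a ha, key b hb]
  have h1δ : (0:ℝ) < 1 + δ := by linarith only [hδ0]
  have hL : 0 < L := hm.trans hmL
  obtain ⟨ham, haL⟩ := ha
  obtain ⟨hbm, hbL⟩ := hb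
  have ha0 : 0 < a := hm.trans_le ham
  have hb0 : 0 < b := ha0.trans hab
  have hbL' : b < L := lt_of_le_of_lt hbL
    (by rw [div_lt_iff₀ h1δ]; linarith only [mul_pos hL hδ0])
  have haL' : a < L := hab.trans hbL'
  set pa := Real.sqrt (L - a) with hpad
  set pb := Real.sqrt (L - b) with hpbd
  set qa := Real.sqrt (δ * a) with hqad
  set qb := Real.sqrt (δ * b) with hqbd
  set ra := Real.sqrt ((1 + δ) * a - m) with hrad
  set rb := Real.sqrt ((1 + δ) * b - m) with hrbd
  set c := Real.sqrt (L - m) with hcd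
  set α := Real.sqrt a with hαd
  set β := Real.sqrt b with hβd
  set sδ := Real.sqrt δ with hsδd
  have hδm : (0:ℝ) < δ * m := mul_pos hδ0 hm
  have hraarg : (0:ℝ) < (1 + δ) * a - m := by
    linarith only [mul_pos hδ0 ha0, ham]
  have hrbarg : (0:ℝ) < (1 + δ) * b - m := by
    linarith only [mul_pos hδ0 hb0, hbm]
  have hpa : 0 < pa := Real.sqrt_pos.2 (by linarith only [haL'])
  have hpb : 0 < pb := Real.sqrt_pos.2 (by linarith only [hbL'])
  have hqa : 0 < qa := Real.sqrt_pos.2 (mul_pos hδ0 ha0)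
  have hqb : 0 < qb := Real.sqrt_pos.2 (mul_pos hδ0 hb0)
  have hra : 0 < ra := Real.sqrt_pos.2 hraarg
  have hrb : 0 < rb := Real.sqrt_pos.2 hrbarg
  have hc : 0 < c := Real.sqrt_pos.2 (by linarith only [hmL])
  have hα : 0 < α := Real.sqrt_pos.2 ha0
  have hβ : 0 < β := Real.sqrt_pos.2 hb0
  have hsδ : 0 < sδ := Real.sqrt_pos.2 hδ0
  have hαβ : α ≤ β := Real.sqrt_le_sqrt hab.le
  have hα2 : α ^ 2 = a := Real.sq_sqrt ha0.le
  have hβ2 : β ^ 2 = b := Real.sq_sqrt hb0.le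
  have hsδ2 : sδ ^ 2 = δ := Real.sq_sqrt hδ0.le
  have hc2 : c ^ 2 = L - m := Real.sq_sqrt (by linarith only [hmL])
  have hpa2 : pa ^ 2 = L - a := Real.sq_sqrt (by linarith only [haL'])
  have hpb2 : pb ^ 2 = L - b := Real.sq_sqrt (by linarith only [hbL'])
  have hpab : pb < pa := by
    rw [hpad, hpbd]
    exact Real.sqrt_lt_sqrt (by linarith only [hbL']) (by linarith only [hab])
  have hT4 : qb * ra ≤ qa * rb := by
    rw [hqbd, hrad, hqad, hrbd, ← Real.sqrt_mul (mul_pos hδ0 hb0).le,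
      ← Real.sqrt_mul (mul_pos hδ0 ha0).le]
    apply Real.sqrt_le_sqrt
    linarith only [mul_nonneg hδm.le (sub_nonneg.2 hab.le)]
  have hqaα : qa = sδ * α := by rw [hqad, hsδd, hαd, Real.sqrt_mul hδ0.le]
  have hqbβ : qb = sδ * β := by rw [hqbd, hsδd, hβd, Real.sqrt_mul hδ0.le]
  have hY : pb * ra = Real.sqrt ((L - b) * ((1 + δ) * a - m)) := by
    rw [hpbd, hrad]; exact (Real.sqrt_mul (by linarith only [hbL']) _).symm
  have hZ : pa * rb = Real.sqrt ((L - a) * ((1 + δ) * b - m)) := by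
    rw [hpad, hrbd]; exact (Real.sqrt_mul (by linarith only [haL']) _).symm
  have hT23 : c * qb + pb * ra ≤ c * qa + pa * rb := by
    set X := c * sδ * (β - α) with hXd
    set Y := pb * ra with hYd
    set Z := pa * rb with hZd
    have hXnn : 0 ≤ X := by
      apply mul_nonneg (mul_nonneg hc.le hsδ.le)
      linarith only [hαβ]
    have hYnn : 0 ≤ Y := (mul_pos hpb hra).le
    have hZnn : 0 ≤ Z := (mul_pos hpa hrb).le
    have hY2 : Y ^ 2 = (L - b) * ((1 + δ) * a - m) := by
      rw [hY]
      exact Real.sq_sqrt (mul_nonneg (by linarith only [hbL']) hraarg.le)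
    have hZ2 : Z ^ 2 = (L - a) * ((1 + δ) * b - m) := by
      rw [hZ]
      exact Real.sq_sqrt (mul_nonneg (by linarith only [haL']) hrbarg.le)
    have hT : (0:ℝ) < (1 + δ) * L - m := by
      linarith only [mul_pos hδ0 hL, hmL]
    have hS : c * sδ * Y ≤ α * ((1 + δ) * L - m) := by
      have e1 : (c * sδ * Y) ^ 2 = (L - m) * δ * ((L - b) * ((1 + δ) * a - m)) := by
        rw [mul_pow, mul_pow, hc2, hsδ2, hY2]
      have e5 : (α * ((1 + δ) * L - m)) ^ 2 = a * ((1 + δ) * L - m) ^ 2 := by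
        rw [mul_pow, hα2]
      have hS2 : (c * sδ * Y) ^ 2 ≤ (α * ((1 + δ) * L - m)) ^ 2 := by
        rw [e1, e5]
        have c1 : (L - b) * ((1 + δ) * a - m) ≤ (L - m) * ((1 + δ) * a) :=
          mul_le_mul (by linarith only [hbm]) (by linarith only [hm])
            hraarg.le (by linarith only [hmL])
        have c2 : ((1 + δ) * (L - m)) ^ 2 ≤ ((1 + δ) * L - m) ^ 2 := by
          apply pow_le_pow_left₀ (mul_pos h1δ (by linarith only [hmL] : (0:ℝ) < L - m)).le
          linarith only [hδm]
        calc (L - m) * δ * ((L - b) * ((1 + δ) * a - m))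
            ≤ (L - m) * δ * ((L - m) * ((1 + δ) * a)) := by
              apply mul_le_mul_of_nonneg_left c1
                (mul_nonneg (by linarith only [hmL]) hδ0.le)
          _ = (δ * (1 + δ)) * ((L - m) ^ 2 * a) := by ring
          _ ≤ ((1 + δ) * (1 + δ)) * ((L - m) ^ 2 * a) := by
              apply mul_le_mul_of_nonneg_right (by nlinarith only [hδ0])
                (mul_nonneg (sq_nonneg _) ha0.le)
          _ = ((1 + δ) * (L - m)) ^ 2 * a := by ring
          _ ≤ ((1 + δ) * L - m) ^ 2 * a := mul_le_mul_of_nonneg_right c2 ha0.le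
          _ = a * ((1 + δ) * L - m) ^ 2 := by ring
      calc c * sδ * Y = Real.sqrt ((c * sδ * Y) ^ 2) :=
            (Real.sqrt_sq (mul_nonneg (mul_nonneg hc.le hsδ.le) hYnn)).symm
        _ ≤ Real.sqrt ((α * ((1 + δ) * L - m)) ^ 2) := Real.sqrt_le_sqrt hS2
        _ = α * ((1 + δ) * L - m) := Real.sqrt_sq (mul_nonneg hα.le hT.le)
    have hsq : (X + Y) ^ 2 ≤ Z ^ 2 := by
      have e2 : (X + Y) ^ 2 = (L - m) * δ * (β - α) ^ 2
          + 2 * ((β - α) * (c * sδ * Y)) + Y ^ 2 := by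
        rw [hXd]
        linear_combination ((β - α) ^ 2 * sδ ^ 2) * hc2 + ((β - α) ^ 2 * (L - m)) * hsδ2
      have e3 : 2 * ((β - α) * (c * sδ * Y)) ≤ 2 * ((β - α) * (α * ((1 + δ) * L - m))) := by
        have h := mul_le_mul_of_nonneg_left hS (show (0:ℝ) ≤ β - α by linarith only [hαβ])
        linarith only [h]
      have e4 : (L - m) * δ * (β - α) ^ 2 + 2 * ((β - α) * (α * ((1 + δ) * L - m)))
          + (L - b) * ((1 + δ) * a - m) ≤ (L - a) * ((1 + δ) * b - m) := by
        have hid : (L - α ^ 2) * ((1 + δ) * β ^ 2 - m)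
            - ((L - m) * δ * (β - α) ^ 2 + 2 * ((β - α) * (α * ((1 + δ) * L - m)))
              + (L - β ^ 2) * ((1 + δ) * α ^ 2 - m))
            = (β - α) ^ 2 * (L - (1 - δ) * m) := by ring
        have hpos : (0:ℝ) ≤ (β - α) ^ 2 * (L - (1 - δ) * m) :=
          mul_nonneg (sq_nonneg _) (by linarith only [hδm, hmL])
        rw [← hα2, ← hβ2]
        linarith only [hid, hpos]
      rw [e2, hZ2, hY2]
      linarith only [e3, e4]
    have hXY : X + Y ≤ Z := by
      calc X + Y = Real.sqrt ((X + Y) ^ 2) :=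
            (Real.sqrt_sq (by linarith only [hXnn, hYnn])).symm
        _ ≤ Real.sqrt (Z ^ 2) := Real.sqrt_le_sqrt hsq
        _ = Z := Real.sqrt_sq hZnn
    rw [hXd] at hXY
    rw [hqaα, hqbβ]
    linarith only [hXY]
  have hcross : (pb + qb) * (c + ra) ≤ (pa + qa) * (c + rb) := by
    have hT1 : pb * c ≤ pa * c := mul_le_mul_of_nonneg_right hpab.le hc.le
    nlinarith only [hT1, hT4, hT23]
  have hfa : L - a + Real.sqrt ((L - a) * (δ * a)) = pa * (pa + qa) := by
    rw [Real.sqrt_mul (show (0:ℝ) ≤ L - a by linarith only [haL']), ← hpad, ← hqad]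
    linear_combination -hpa2
  have hfb : L - b + Real.sqrt ((L - b) * (δ * b)) = pb * (pb + qb) := by
    rw [Real.sqrt_mul (show (0:ℝ) ≤ L - b by linarith only [hbL']), ← hpbd, ← hqbd]
    linear_combination -hpb2
  have hga : L - m + Real.sqrt ((L - m) * ((1 + δ) * a - m)) = c * (c + ra) := by
    rw [Real.sqrt_mul (show (0:ℝ) ≤ L - m by linarith only [hmL]), ← hcd, ← hrad]
    linear_combination -hc2
  have hgb : L - m + Real.sqrt ((L - m) * ((1 + δ) * b - m)) = c * (c + rb) := by
    rw [Real.sqrt_mul (show (0:ℝ) ≤ L - m by linarith only [hmL]), ← hcd, ← hrbd]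
    linear_combination -hc2
  rw [hfa, hfb, hga, hgb]
  rw [div_lt_div_iff₀ (mul_pos hc (by positivity : (0:ℝ) < c + rb)) (mul_pos hc (by positivity : (0:ℝ) < c + ra))]
  have hmain : pb * ((pb + qb) * (c + ra)) < pa * ((pa + qa) * (c + rb)) :=
    calc pb * ((pb + qb) * (c + ra)) ≤ pb * ((pa + qa) * (c + rb)) :=
          mul_le_mul_of_nonneg_left hcross hpb.le
      _ < pa * ((pa + qa) * (c + rb)) :=
          mul_lt_mul_of_pos_right hpab (by positivity)
  calc pb * (pb + qb) * (c * (c + ra)) = c * (pb * ((pb + qb) * (c + ra))) := by ring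
    _ < c * (pa * ((pa + qa) * (c + rb))) := mul_lt_mul_of_pos_left hmain hc
    _ = pa * (pa + qa) * (c * (c + rb)) := by ring
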